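/- Claim (Algorithm 1 stops at a stationary point in the single-client full-gradient case, Appendix A.2 / Algorithm 2). Let f₁ : ℝ^d → ℝ be differentiable, g proper closed convex, and x⋆ a first-order stationary point, i.e., 0 ∈ ∇f₁(x⋆) + ∂g(x⋆) (equivalently x⋆ = P_β(x⋆ − β∇f₁(x⋆)) for every β > 0). Run Algorithm 1 with n = 1 client, full gradients, any τ ≥ 1, η > 0, η_g > 0, η̃ = τ·η·η_g, and initialization x̄^1 = x⋆ − η̃·∇f₁(x⋆) (so that P_{η̃}(x̄^1) = x⋆). Then for every round r ≥ 1 and every local step t ∈ {0,…,τ}: ẑ_{1,t}^r = x⋆ − t·η·∇f₁(x⋆), z_{1,t}^r = P_{tη}(ẑ_{1,t}^r) = x⋆, the server iterate satisfies x̄^{r+1} = x⋆ − η̃·∇f₁(x⋆), and the output satisfies P_{η̃}(x̄^{R+1}) = x⋆ for every R. -/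
import Mathlib


open MeasureTheory Finset RealInnerProductSpace

/-- Algorithm 1 stops at a stationary point in the single-client full-gradient case. -/
theorem single_client_stops_at_stationary_point
    {d : ℕ} (hd : 0 < d) (τ : ℕ) (hτ : 1 ≤ τ)
    (η ηg : ℝ) (hη : 0 < η) (hηg : 0 < ηg)
    (f1 g : EuclideanSpace ℝ (Fin d) → ℝ)
    (Gf1 : EuclideanSpace ℝ (Fin d) → EuclideanSpace ℝ (Fin d))
    (hgrad : ∀ x, HasGradientAt f1 (Gf1 x) x)
    (hgconv : ConvexOn ℝ Set.univ g) (hgcont : Continuous g)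
    (prox : ℝ → EuclideanSpace ℝ (Fin d) → EuclideanSpace ℝ (Fin d))
    (hprox0 : ∀ w, prox 0 w = w)
    (hprox : ∀ β : ℝ, 0 < β → ∀ w u,
      β * g (prox β w) + ‖w - prox β w‖ ^ 2 / 2 ≤ β * g u + ‖w - u‖ ^ 2 / 2)
    (xstar : EuclideanSpace ℝ (Fin d))
    (hstat : ∃ v, (∀ y, g xstar + ⟪v, y - xstar⟫ ≤ g y) ∧ Gf1 xstar + v = 0)
    (xbar : ℕ → EuclideanSpace ℝ (Fin d))
    (zhat z : ℕ → ℕ → EuclideanSpace ℝ (Fin d))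
    (hinit : ∀ r, 1 ≤ r →
      zhat r 0 = prox ((τ : ℝ) * η * ηg) (xbar r) ∧ z r 0 = prox ((τ : ℝ) * η * ηg) (xbar r))
    (hlocal : ∀ r, 1 ≤ r → ∀ t, t < τ → zhat r (t + 1) = zhat r t - η • Gf1 (z r t))
    (hproxstep : ∀ r, 1 ≤ r → ∀ t, t < τ → z r (t + 1) = prox (((t : ℝ) + 1) * η) (zhat r (t + 1)))
    (hserver : ∀ r, 1 ≤ r →
      xbar (r + 1) = prox ((τ : ℝ) * η * ηg) (xbar r)
        + ηg • (zhat r τ - prox ((τ : ℝ) * η * ηg) (xbar r)))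
    (hx1 : xbar 1 = xstar - ((τ : ℝ) * η * ηg) • Gf1 xstar) :
    (∀ r, 1 ≤ r →
        (∀ t, t ≤ τ →
          zhat r t = xstar - ((t : ℝ) * η) • Gf1 xstar ∧
            z r t = prox ((t : ℝ) * η) (zhat r t) ∧ z r t = xstar) ∧
        xbar (r + 1) = xstar - ((τ : ℝ) * η * ηg) • Gf1 xstar) ∧
      ∀ R : ℕ, prox ((τ : ℝ) * η * ηg) (xbar (R + 1)) = xstar := by

  obtain ⟨v, hv, hvG⟩ := hstat
  have hG : Gf1 xstar = -v := by
    have := hvG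
    exact eq_neg_of_add_eq_zero_left this
  have key : ∀ β : ℝ, 0 < β → prox β (xstar - β • Gf1 xstar) = xstar := by
    intro β hβ
    set w := xstar - β • Gf1 xstar with hw
    set p := prox β w with hp
    have h1 := hprox β hβ w xstar
    rw [← hp] at h1
    have h2 := hv p
    have hwx : w - xstar = β • v := by rw [hw, hG]; module
    have hwp : w - p = (xstar - p) + β • v := by rw [hw, hG]; module
    have e1 : ‖w - xstar‖ ^ 2 = β ^ 2 * ‖v‖ ^ 2 := by
      rw [hwx, norm_smul, mul_pow, Real.norm_eq_abs, sq_abs]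
    have e2 : ‖w - p‖ ^ 2
        = ‖xstar - p‖ ^ 2 + 2 * (β * ⟪v, xstar - p⟫) + β ^ 2 * ‖v‖ ^ 2 := by
      rw [hwp, norm_add_sq_real, norm_smul, real_inner_smul_right, mul_pow,
        Real.norm_eq_abs, sq_abs, real_inner_comm (xstar - p) v]
    have e3 : ⟪v, p - xstar⟫ = -⟪v, xstar - p⟫ := by
      rw [← inner_neg_right]
      congr 1
      module
    rw [e3] at h2
    rw [e1, e2] at h1
    have hgp : β * (g xstar - ⟪v, xstar - p⟫) ≤ β * g p := by
      apply mul_le_mul_of_nonneg_left _ hβ.le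
      linarith
    have hpz : ‖xstar - p‖ ^ 2 ≤ 0 := by linarith
    have hn : ‖xstar - p‖ = 0 :=
      sq_eq_zero_iff.mp (le_antisymm hpz (sq_nonneg _))
    have := sub_eq_zero.mp (norm_eq_zero.mp hn)
    exact this.symm
  have hβτ : (0 : ℝ) < (τ : ℝ) * η * ηg := by
    have : (0:ℝ) < (τ:ℝ) := by exact_mod_cast hτ
    positivity
  have roundstep : ∀ r, 1 ≤ r → xbar r = xstar - ((τ : ℝ) * η * ηg) • Gf1 xstar →
      (∀ t, t ≤ τ →
          zhat r t = xstar - ((t : ℝ) * η) • Gf1 xstar ∧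
            z r t = prox ((t : ℝ) * η) (zhat r t) ∧ z r t = xstar) ∧
        xbar (r + 1) = xstar - ((τ : ℝ) * η * ηg) • Gf1 xstar := by
    intro r hr hxr
    have hproxbar : prox ((τ : ℝ) * η * ηg) (xbar r) = xstar := by
      rw [hxr]; exact key _ hβτ
    obtain ⟨hz0, hz0'⟩ := hinit r hr
    have main : ∀ t, t ≤ τ →
        zhat r t = xstar - ((t : ℝ) * η) • Gf1 xstar ∧
          z r t = prox ((t : ℝ) * η) (zhat r t) ∧ z r t = xstar := by
      intro t
      induction t with
      | zero =>
        intro _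
        have h1 : zhat r 0 = xstar := by rw [hz0, hproxbar]
        have h2 : z r 0 = xstar := by rw [hz0', hproxbar]
        refine ⟨by simp [h1], ?_, h2⟩
        simp only [Nat.cast_zero, zero_mul, hprox0, h1, h2]
      | succ t ih =>
        intro ht
        have ht' : t < τ := ht
        obtain ⟨ihz, _, ihx⟩ := ih (le_of_lt ht')
        have hzh : zhat r (t + 1) = xstar - (((t : ℝ) + 1) * η) • Gf1 xstar := by
          rw [hlocal r hr t ht', ihz, ihx]
          module
        have hzp := hproxstep r hr t ht'
        have hzx : z r (t + 1) = xstar := by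
          rw [hzp, hzh]; exact key _ (by positivity)
        refine ⟨by rw [hzh]; push_cast; ring_nf, ?_, hzx⟩
        rw [hzp]; push_cast; ring_nf
    refine ⟨main, ?_⟩
    have hzτ := (main τ le_rfl).1
    rw [hserver r hr, hproxbar, hzτ]
    module
  have hxbar : ∀ r, 1 ≤ r → xbar r = xstar - ((τ : ℝ) * η * ηg) • Gf1 xstar := by
    intro r hr
    induction r with
    | zero => omega
    | succ r ih =>
      rcases Nat.eq_or_lt_of_le hr with h | h
      · rw [← h]; exact hx1
      · have hr1 : 1 ≤ r := by omega
        exact (roundstep r hr1 (ih hr1)).2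
  refine ⟨fun r hr => roundstep r hr (hxbar r hr), fun R => ?_⟩
  rw [hxbar (R + 1) (by omega)]
  exact key _ hβτ
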